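/- Let p be a prime, π ∈ pℤ_p with ord_p(π/p − 1) > 0, f(X) = πX + Σ_{i=2}^{p} C(p,i) X^i, and let x_k be g×g matrices over ℚ_p with x_{-1} = 0, x_0 = I_g, p x_k − C_p x_{k-1} + x_{k-2} = 0, where C_p has entries divisible by p. Define ℓ(x) = Σ_{k≥0} x_k f^{(k)}(x) (applied coordinatewise to a vector x of g variables). Then u ∗ ℓ ≡ 0 mod p, where u(T) = p − C_p T + T^2; that is, ℓ(x^{p^2}) − C_p ℓ(x^p) + p ℓ(x) has all coefficients in p ℤ_p. -/

import Mathlib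

open Polynomial

section AuxLemmas

lemma aux_add_pow {R : Type*} [CommRing R] {p : ℕ} (hp' : p.Prime) (B t : R) :
    ∃ u : R, (B + t) ^ p = B ^ p + (p : R) * t * u + t ^ p := by
  have h := add_pow_prime_eq hp' B t
  have hdvd : t ∣ ∑ k ∈ Finset.Ioo 0 p, B ^ k * t ^ (p - k) * ((p.choose k) / p : ℕ) := by
    refine Finset.dvd_sum fun k hk => ?_
    obtain ⟨hk0, hkp⟩ := Finset.mem_Ioo.mp hk
    exact dvd_mul_of_dvd_left (dvd_mul_of_dvd_right (dvd_pow_self t (by omega)) _) _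
  obtain ⟨u, hu⟩ := hdvd
  exact ⟨B * ∑ k ∈ Finset.Ioo 0 p, B ^ (k - 1) * t ^ (p - k - 1) * ((p.choose k / p : ℕ) : R), by rw [h]; ring⟩

lemma sub_dvd_comp_sub {R : Type*} [CommRing R] (q A B : R[X]) :
    (A - B) ∣ (q.comp A - q.comp B) := by
  induction q using Polynomial.induction_on' with
  | add u v hu hv =>
    have : (u + v).comp A - (u + v).comp B = (u.comp A - u.comp B) + (v.comp A - v.comp B) := by
      simp [add_comp]; ring
    rw [this]; exact dvd_add hu hv
  | monomial n a =>
    simp only [monomial_comp]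
    have : C a * A ^ n - C a * B ^ n = C a * (A ^ n - B ^ n) := by ring
    rw [this]
    exact Dvd.dvd.mul_left (sub_dvd_pow_sub_pow A B n) _

variable {p : ℕ} [hp : Fact p.Prime]

lemma honda_step (f : Polynomial ℤ_[p]) (r : Polynomial ℤ_[p])
    (hr : f = X ^ p + C (p:ℤ_[p]) * r) (n : ℕ) (A B D : Polynomial ℤ_[p])
    (hD : A - B = C ((p:ℤ_[p])^(n+1)) * D) :
    C ((p:ℤ_[p])^(n+2)) ∣ f.comp A - f.comp B := by
  have hAB : A = B + C ((p:ℤ_[p])^(n+1)) * D := by linear_combination hD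
  have e1 : C ((p:ℤ_[p])) * C ((p:ℤ_[p])^(n+1)) = C ((p:ℤ_[p])^(n+2)) := by
    rw [← C_mul, ← pow_succ']
  have e0 : (p : Polynomial ℤ_[p]) = C ((p:ℤ_[p])) := by simp
  have expand : f.comp A - f.comp B
      = (A ^ p - B ^ p) + C (p:ℤ_[p]) * (r.comp A - r.comp B) := by
    rw [hr]
    simp only [add_comp, pow_comp, X_comp, mul_comp, C_comp]
    ring
  rw [expand]
  have h1 : C ((p:ℤ_[p]) ^ (n+2)) ∣ A ^ p - B ^ p := by
    obtain ⟨u, hu⟩ := aux_add_pow hp.out B (C ((p:ℤ_[p])^(n+1)) * D)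
    rw [hAB, hu]
    have e2 : B ^ p + (p : Polynomial ℤ_[p]) * (C ((p:ℤ_[p])^(n+1)) * D) * u
        + (C ((p:ℤ_[p])^(n+1)) * D) ^ p - B ^ p
        = (p : Polynomial ℤ_[p]) * (C ((p:ℤ_[p])^(n+1)) * D) * u
          + (C ((p:ℤ_[p])^(n+1)) * D) ^ p := by ring
    rw [e2]
    refine dvd_add ⟨D * u, ?_⟩ ?_
    · rw [e0]; linear_combination (D * u) * e1
    · rw [mul_pow, ← C_pow, ← pow_mul]
      refine Dvd.dvd.mul_right (_root_.map_dvd C (pow_dvd_pow _ ?_)) _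
      have := hp.out.two_le
      nlinarith
  have h2 : C ((p:ℤ_[p]) ^ (n+2)) ∣ C (p:ℤ_[p]) * (r.comp A - r.comp B) := by
    obtain ⟨w, hw⟩ := sub_dvd_comp_sub r A B
    refine ⟨D * w, ?_⟩
    rw [hw, hD]
    linear_combination (D * w) * e1
  exact dvd_add h1 h2

lemma honda_cong (f : Polynomial ℤ_[p]) (hfp : C ((p : ℤ_[p])) ∣ (f - X ^ p)) (k : ℕ) :
    C ((p : ℤ_[p]) ^ (k + 1)) ∣
      ((fun q => f.comp q)^[k + 1] X - ((fun q => f.comp q)^[k] X).comp (X ^ p)) := by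
  induction k with
  | zero =>
    simpa [Function.iterate_one, comp_X, X_comp, pow_one] using hfp
  | succ k ih =>
    obtain ⟨D, hD⟩ := ih
    obtain ⟨r0, hr0⟩ := hfp
    have hr : f = X ^ p + C (p:ℤ_[p]) * r0 := by linear_combination hr0
    have hFk2 : (fun q => f.comp q)^[k + 1 + 1] X
        = f.comp ((fun q => f.comp q)^[k + 1] X) := Function.iterate_succ_apply' _ _ _
    have hBc : ((fun q => f.comp q)^[k + 1] X).comp (X ^ p)
        = f.comp (((fun q => f.comp q)^[k] X).comp (X ^ p)) := by
      rw [Function.iterate_succ_apply', comp_assoc]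
    rw [hFk2, hBc]
    exact honda_step f r0 hr k _ _ D hD

lemma honda_coeff (f : Polynomial ℤ_[p]) (hfp : C ((p : ℤ_[p])) ∣ (f - X ^ p)) (k m : ℕ) :
    (p:ℤ_[p])^(k+1) ∣ ((fun q => f.comp q)^[k+1] X).coeff m
      - (if p ∣ m then ((fun q => f.comp q)^[k] X).coeff (m / p) else 0) := by
  have h := (C_dvd_iff_dvd_coeff _ _).mp (honda_cong f hfp k) m
  rwa [coeff_sub, ← expand_eq_comp_X_pow, coeff_expand hp.out.pos] at h

lemma iter_coeff_zero (f : Polynomial ℤ_[p]) (hf0 : f.coeff 0 = 0) (k : ℕ) :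
    ((fun q => f.comp q)^[k] X).coeff 0 = 0 := by
  induction k with
  | zero => simp
  | succ k ih =>
    have h1 : ((fun q => f.comp q)^[k] X).eval 0 = 0 := by
      rw [← coeff_zero_eq_eval_zero]; exact ih
    rw [Function.iterate_succ_apply', coeff_zero_eq_eval_zero, eval_comp, h1,
      ← coeff_zero_eq_eval_zero]
    exact hf0

lemma iter_coeff_dvd (f : Polynomial ℤ_[p]) (hfp : C ((p : ℤ_[p])) ∣ (f - X ^ p))
    (hf0 : f.coeff 0 = 0) :
    ∀ k j m : ℕ, m ≤ p ^ j → (p:ℤ_[p])^(k - j) ∣ ((fun q => f.comp q)^[k] X).coeff m := by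
  intro k
  induction k with
  | zero => intro j m _; simp
  | succ k ih =>
    intro j m hm
    by_cases hkj : k + 1 ≤ j
    · rw [Nat.sub_eq_zero_of_le hkj]; simp
    · push_neg at hkj
      have hco := honda_coeff f hfp k m
      by_cases hpm : p ∣ m
      · rcases Nat.eq_zero_or_pos j with rfl | hj
        · have hm0 : m = 0 := by
            rcases Nat.le_one_iff_eq_zero_or_eq_one.mp (by simpa using hm) with rfl | rfl
            · rfl
            · exact absurd (Nat.dvd_one.mp hpm) hp.out.ne_one
          subst hm0
          rw [iter_coeff_zero f hf0]
          exact dvd_zero _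
        · have h1 : m / p ≤ p ^ (j - 1) := by
            have h2 : m / p ≤ p ^ j / p := Nat.div_le_div_right hm
            have h3 : p ^ j / p = p ^ (j - 1) := by
              conv_lhs => rw [show j = (j - 1) + 1 by omega, pow_succ]
              exact Nat.mul_div_cancel _ hp.out.pos
            omega
          have h2 := ih (j-1) (m/p) h1
          rw [if_pos hpm] at hco
          have hd1 : (p:ℤ_[p])^(k + 1 - j) ∣ ((fun q => f.comp q)^[k+1] X).coeff m
              - ((fun q => f.comp q)^[k] X).coeff (m / p) :=
            (pow_dvd_pow _ (by omega : k + 1 - j ≤ k + 1)).trans hco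
          have hd2 : (p:ℤ_[p])^(k + 1 - j) ∣ ((fun q => f.comp q)^[k] X).coeff (m / p) := by
            rwa [show k + 1 - j = k - (j - 1) by omega]
          simpa using dvd_add hd1 hd2
      · rw [if_neg hpm, sub_zero] at hco
        exact (pow_dvd_pow _ (by omega : k + 1 - j ≤ k + 1)).trans hco

lemma norm_coe_le_of_dvd (n : ℕ) (c : ℤ_[p]) (h : (p:ℤ_[p])^n ∣ c) :
    ‖(c : ℚ_[p])‖ ≤ ((p:ℝ)^n)⁻¹ := by
  obtain ⟨d, rfl⟩ := h
  push_cast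
  rw [norm_mul, norm_pow, Padic.norm_p]
  have hd : ‖(d : ℚ_[p])‖ ≤ 1 := by rw [← PadicInt.norm_def]; exact d.norm_le_one
  have hp0 : (0:ℝ) < p := by exact_mod_cast hp.out.pos
  calc ((p:ℝ))⁻¹ ^ n * ‖(d : ℚ_[p])‖ ≤ ((p:ℝ)⁻¹)^n * 1 := by
        apply mul_le_mul_of_nonneg_left hd (by positivity)
    _ = ((p:ℝ)^n)⁻¹ := by rw [mul_one, inv_pow]

omit hp in
lemma key_ineq (hp0 : (0:ℝ) < p) (hp1 : (1:ℝ) ≤ p) (a b c d : ℕ) (h : b + d ≤ a + c) :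
    ((p:ℝ)^a)⁻¹ * (p:ℝ)^b ≤ (p:ℝ)^c * ((p:ℝ)^d)⁻¹ := by
  rw [inv_mul_le_iff₀ (by positivity), ← mul_assoc, le_mul_inv_iff₀ (by positivity),
    ← pow_add, ← pow_add]
  exact pow_le_pow_right₀ hp1 (by omega)

lemma summable_helper (t : ℕ → ℚ_[p]) (C : ℝ)
    (h : ∀ k, ‖t k‖ ≤ C * ((p:ℝ)⁻¹)^(k/2)) : Summable t := by
  apply NonarchimedeanAddGroup.summable_of_tendsto_cofinite_zero
  rw [Nat.cofinite_eq_atTop]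
  rw [tendsto_zero_iff_norm_tendsto_zero]
  have hq0 : (0:ℝ) ≤ (p:ℝ)⁻¹ := by positivity
  have hq1 : (p:ℝ)⁻¹ < 1 := by
    rw [inv_lt_one_iff₀]
    right
    exact_mod_cast hp.out.one_lt
  have hdiv : Filter.Tendsto (fun k : ℕ => k / 2) Filter.atTop Filter.atTop :=
    Filter.tendsto_atTop_atTop.mpr fun b => ⟨2 * b, fun k hk => by omega⟩
  have hg : Filter.Tendsto (fun k : ℕ => C * ((p:ℝ)⁻¹)^(k/2)) Filter.atTop (nhds 0) := by
    have := ((tendsto_pow_atTop_nhds_zero_of_lt_one hq0 hq1).comp hdiv).const_mul C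
    simpa using this
  exact squeeze_zero (fun k => norm_nonneg _) h hg

end AuxLemmas

/-- With `f(X) = πX + ∑_{i=2}^p C(p,i)X^i`, `π ≡ p mod p²`,
`x_k` the matrices of the recurrence `p x_k − C_p x_{k-1} + x_{k-2} = 0`
(`x_{-1}=0`, `x_0 = I`, entries of `C_p` divisible by `p`), and
`ℓ(x) = ∑_{k≥0} x_k f^{(k)}(x)` (whose `m`-th coefficient is the convergent sum
`L m = ∑'_k (coeff_m f^{(k)}) · x_k`), one has `u ∗ ℓ ≡ 0 mod p` for
`u(T) = p − C_p T + T²`: every coefficient of `ℓ(x^{p²}) − C_p ℓ(x^p) + p ℓ(x)`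
has all entries in `p ℤ_p`. -/
theorem stmt18 (p g : ℕ) [Fact p.Prime] (π : ℤ_[p])
    (hπ : ((p : ℤ_[p]) * p) ∣ (π - p))
    (f : Polynomial ℤ_[p])
    (hf : f = Polynomial.C π * Polynomial.X +
      ∑ i ∈ Finset.Icc 2 p, Polynomial.C ((p.choose i : ℤ_[p])) * Polynomial.X ^ i)
    (Cp : Matrix (Fin g) (Fin g) ℚ_[p])
    (hCp : ∀ i j, ∃ c : ℤ, Cp i j = (p : ℚ_[p]) * (c : ℚ_[p]))
    (x : ℕ → Matrix (Fin g) (Fin g) ℚ_[p])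
    (hx0 : x 0 = 1)
    (hx1 : (p : ℚ_[p]) • x 1 = Cp)
    (hrec : ∀ k, 2 ≤ k → (p : ℚ_[p]) • x k - Cp * x (k - 1) + x (k - 2) = 0)
    (L : ℕ → Matrix (Fin g) (Fin g) ℚ_[p])
    (hL : ∀ m, L m =
      ∑' k : ℕ, (((((fun q => f.comp q)^[k] Polynomial.X).coeff m : ℤ_[p]) : ℚ_[p])) • x k) :
    ∀ m : ℕ, 1 ≤ m → ∀ i j : Fin g,
      ‖((if p ^ 2 ∣ m then L (m / p ^ 2) else 0)
          - Cp * (if p ∣ m then L (m / p) else 0)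
          + (p : ℚ_[p]) • L m) i j‖ ≤ ((p : ℝ))⁻¹ := by
  have hpp : p.Prime := Fact.out
  have hp0R : (0:ℝ) < p := by exact_mod_cast hpp.pos
  have hp1R : (1:ℝ) ≤ p := by exact_mod_cast hpp.one_le
  have hpQ : (p : ℚ_[p]) ≠ 0 := by
    exact_mod_cast (Nat.cast_ne_zero (R := ℚ_[p])).mpr hpp.ne_zero
  -- basic facts about f
  have hπp : (p:ℤ_[p]) ∣ π := by
    have h1 : (p:ℤ_[p]) ∣ π - p := dvd_trans (Dvd.intro p rfl) hπ
    simpa using dvd_add h1 (dvd_refl (p:ℤ_[p]))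
  have hfp : C ((p : ℤ_[p])) ∣ (f - X ^ p) := by
    rw [C_dvd_iff_dvd_coeff]
    intro n
    subst hf
    have h2p := hpp.two_le
    simp only [coeff_sub, coeff_add, coeff_C_mul, finset_sum_coeff,
      coeff_X_pow, mul_ite, mul_one, mul_zero, Finset.sum_ite_eq, Finset.mem_Icc]
    by_cases h3 : n = p
    · rw [h3, coeff_X, if_neg (by omega : ¬ (1:ℕ) = p), if_pos (⟨h2p, le_rfl⟩ : 2 ≤ p ∧ p ≤ p),
        if_pos rfl, Nat.choose_self]
      simp
    · by_cases h2 : 2 ≤ n ∧ n ≤ p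
      · rw [coeff_X, if_neg (by omega : ¬ (1:ℕ) = n), if_pos h2, if_neg h3]
        have : (p:ℤ_[p]) ∣ ((p.choose n : ℕ) : ℤ_[p]) :=
          Nat.cast_dvd_cast (hpp.dvd_choose_self (by omega) (by omega))
        simpa using this
      · by_cases h1 : n = 1
        · subst h1
          rw [coeff_X, if_pos rfl, if_neg h2, if_neg h3]
          simpa using hπp
        · rw [coeff_X, if_neg (by omega : ¬ (1:ℕ) = n), if_neg h2, if_neg h3]
          simp
  have hf0 : f.coeff 0 = 0 := by
    subst hf
    simp [coeff_C_mul, coeff_X, finset_sum_coeff, coeff_X_pow, Finset.sum_ite_eq,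
      Finset.mem_Icc]
  clear hf hπ hπp
  -- coefficient notation
  set A : ℕ → ℕ → ℤ_[p] := fun k n => (((fun q => f.comp q)^[k] Polynomial.X).coeff n) with hA
  -- norm bound on entries of x k
  have hCpn : ∀ i j, ‖Cp i j‖ ≤ ((p:ℝ))⁻¹ := by
    intro i j
    obtain ⟨c, hc⟩ := hCp i j
    rw [hc, norm_mul, Padic.norm_p]
    calc ((p:ℝ))⁻¹ * ‖((c:ℤ):ℚ_[p])‖ ≤ ((p:ℝ))⁻¹ * 1 :=
          mul_le_mul_of_nonneg_left (Padic.norm_int_le_one c) (by positivity)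
      _ = ((p:ℝ))⁻¹ := mul_one _
  have hxb : ∀ k, ∀ i j : Fin g, ‖x k i j‖ ≤ (p:ℝ)^(k/2) := by
    intro k
    induction k using Nat.strong_induction_on with
    | _ k ih =>
      match k with
      | 0 =>
        intro i j
        rw [hx0]
        rw [Matrix.one_apply]
        split_ifs <;> simp
      | 1 =>
        intro i j
        obtain ⟨c, hc⟩ := hCp i j
        have he := congrFun (congrFun hx1 i) j
        simp only [Matrix.smul_apply, smul_eq_mul] at he
        have hx1e : x 1 i j = ((c:ℤ):ℚ_[p]) := mul_left_cancel₀ hpQ (he.trans hc)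
        rw [hx1e]
        simpa using Padic.norm_int_le_one c
      | (k+2) =>
        intro i j
        have hE := hrec (k+2) (by omega)
        have hE' := congrFun (congrFun hE i) j
        simp only [Matrix.sub_apply, Matrix.add_apply, Matrix.smul_apply,
          Matrix.zero_apply, smul_eq_mul] at hE'
        rw [show k + 2 - 1 = k + 1 from rfl, show k + 2 - 2 = k from rfl] at hE'
        -- hE' : p * x (k+2) i j - (Cp * x (k+1)) i j + x k i j = 0
        have hx2 : x (k+2) i j = ((p:ℚ_[p]))⁻¹ * ((Cp * x (k+1)) i j - x k i j) := by
          field_simp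
          linear_combination hE'
        have hmulb : ‖(Cp * x (k+1)) i j‖ ≤ (p:ℝ)^(k/2) := by
          rw [Matrix.mul_apply]
          refine IsUltrametricDist.norm_sum_le_of_forall_le_of_nonneg (by positivity) ?_
          intro l _
          rw [norm_mul]
          calc ‖Cp i l‖ * ‖x (k+1) l j‖ ≤ ((p:ℝ))⁻¹ * ((p:ℝ)^(k/2) * p) := by
                refine mul_le_mul (hCpn i l) ?_ (norm_nonneg _) (by positivity)
                calc ‖x (k+1) l j‖ ≤ (p:ℝ)^((k+1)/2) := ih (k+1) (by omega) l j
                  _ ≤ (p:ℝ)^(k/2 + 1) := pow_le_pow_right₀ hp1R (by omega)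
                  _ = (p:ℝ)^(k/2) * p := by rw [pow_succ]
            _ = (p:ℝ)^(k/2) := by field_simp
        have hsubb : ‖(Cp * x (k+1)) i j - x k i j‖ ≤ (p:ℝ)^(k/2) := by
          have := IsUltrametricDist.norm_add_le_max ((Cp * x (k+1)) i j) (-(x k i j))
          rw [← sub_eq_add_neg, norm_neg] at this
          exact this.trans (max_le hmulb (ih k (by omega) i j))
        rw [hx2, norm_mul, norm_inv, Padic.norm_p, inv_inv]
        calc (p:ℝ) * ‖(Cp * x (k+1)) i j - x k i j‖ ≤ (p:ℝ) * (p:ℝ)^(k/2) :=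
              mul_le_mul_of_nonneg_left hsubb (le_of_lt hp0R)
          _ = (p:ℝ)^((k+2)/2) := by
              rw [show (k+2)/2 = k/2 + 1 by omega, pow_succ]
              ring
  -- master term bound
  have hmaster : ∀ (J k : ℕ) (c : ℤ_[p]) (v : ℚ_[p]), (p:ℤ_[p])^(k-J) ∣ c →
      ‖v‖ ≤ (p:ℝ)^(k/2) → ‖(c:ℚ_[p]) * v‖ ≤ (p:ℝ)^J * ((p:ℝ)⁻¹)^(k/2) := by
    intro J k c v hc hv
    rw [norm_mul]
    calc ‖(c:ℚ_[p])‖ * ‖v‖ ≤ ((p:ℝ)^(k-J))⁻¹ * (p:ℝ)^(k/2) :=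
          mul_le_mul (norm_coe_le_of_dvd _ c hc) hv (norm_nonneg _) (by positivity)
      _ ≤ (p:ℝ)^J * ((p:ℝ)^(k/2))⁻¹ := key_ineq hp0R hp1R _ _ _ _ (by omega)
      _ = (p:ℝ)^J * ((p:ℝ)⁻¹)^(k/2) := by rw [inv_pow]
  -- summability of the basic series, entrywise
  have hsE : ∀ (m' : ℕ) (i j : Fin g), Summable (fun k => ((A k m' : ℚ_[p])) * x k i j) := by
    intro m' i j
    refine summable_helper _ ((p:ℝ)^m') fun k => ?_
    refine hmaster m' k _ _ ?_ (hxb k i j)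
    exact iter_coeff_dvd f hfp hf0 k m' m' (Nat.lt_pow_self (n := m') hpp.one_lt).le
  have hsumM : ∀ m' : ℕ, Summable (fun k => ((A k m' : ℚ_[p])) • x k) := by
    intro m'
    refine Pi.summable.mpr fun i => Pi.summable.mpr fun j => ?_
    refine (hsE m' i j).congr fun k => ?_
    simp [Matrix.smul_apply, smul_eq_mul]
  have hLe : ∀ (m' : ℕ) (i j : Fin g), L m' i j = ∑' k, (A k m' : ℚ_[p]) * x k i j := by
    intro m' i j
    rw [hL m']
    erw [tsum_apply (hsumM m'), tsum_apply (Pi.summable.mp (hsumM m') i)]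
    exact tsum_congr fun k => by simp [Matrix.smul_apply, smul_eq_mul]
  intro m hm i j
  -- the three coefficient sequences
  set αZ : ℕ → ℤ_[p] := fun k => if p^2 ∣ m then A k (m / p^2) else 0 with hαZ
  set βZ : ℕ → ℤ_[p] := fun k => if p ∣ m then A k (m / p) else 0 with hβZ
  set γZ : ℕ → ℤ_[p] := fun k => (p:ℤ_[p]) * A k m with hγZ
  set δZ : ℕ → ℤ_[p] := fun k => if k = 0 then 0 else (p:ℤ_[p]) * βZ (k-1) with hδZ
  set J : ℕ := m with hJ
  have hmJ : m ≤ p ^ J := (Nat.lt_pow_self (n := m) hpp.one_lt).le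
  have hdA : ∀ (k : ℕ) (m' : ℕ), m' ≤ m → (p:ℤ_[p])^(k-J) ∣ A k m' := fun k m' h =>
    iter_coeff_dvd f hfp hf0 k J m' (h.trans hmJ)
  have hdα : ∀ k, (p:ℤ_[p])^(k-J) ∣ αZ k := by
    intro k; rw [hαZ]; dsimp only
    split_ifs
    · exact hdA k _ (Nat.div_le_self _ _)
    · exact dvd_zero _
  have hdβ : ∀ k, (p:ℤ_[p])^(k-J) ∣ βZ k := by
    intro k; rw [hβZ]; dsimp only
    split_ifs
    · exact hdA k _ (Nat.div_le_self _ _)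
    · exact dvd_zero _
  have hdβ' : ∀ k, (p:ℤ_[p])^(k-J) ∣ βZ (k+1) := fun k =>
    (pow_dvd_pow _ (by omega : k - J ≤ (k+1) - J)).trans (hdβ (k+1))
  have hdγ : ∀ k, (p:ℤ_[p])^(k-J) ∣ γZ k := fun k =>
    Dvd.dvd.mul_left (hdA k m le_rfl) _
  have hdδ : ∀ k, (p:ℤ_[p])^(k-J) ∣ δZ k := by
    intro k; rw [hδZ]; dsimp only
    split_ifs with h
    · exact dvd_zero _
    · have h1 : (p:ℤ_[p])^(1 + ((k-1)-J)) ∣ (p:ℤ_[p]) * βZ (k-1) := by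
        rw [pow_add, pow_one]
        exact mul_dvd_mul_left _ (hdβ (k-1))
      exact (pow_dvd_pow _ (by omega : k - J ≤ 1 + ((k-1)-J))).trans h1
  -- key congruences
  have hαβ : ∀ k, (p:ℤ_[p])^(k+1) ∣ αZ k - βZ (k+1) := by
    intro k
    by_cases hpm : p ∣ m
    · have h := honda_coeff f hfp k (m/p)
      by_cases hp2m : p^2 ∣ m
      · have hpp' : p ∣ m / p := by
          rw [Nat.dvd_div_iff_mul_dvd hpm]
          rwa [← pow_two]
        rw [if_pos hpp'] at h
        have e : m / p / p = m / p^2 := by rw [Nat.div_div_eq_div_mul, ← pow_two]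
        rw [e] at h
        rw [hαZ, hβZ]; dsimp only
        rw [if_pos hp2m, if_pos hpm]
        have := (dvd_neg.mpr h)
        rwa [neg_sub] at this
      · have hpp' : ¬ p ∣ m / p := by
          rw [Nat.dvd_div_iff_mul_dvd hpm, ← pow_two]
          exact hp2m
        rw [if_neg hpp', sub_zero] at h
        rw [hαZ, hβZ]; dsimp only
        rw [if_neg hp2m, if_pos hpm, zero_sub]
        exact dvd_neg.mpr h
    · have hp2m : ¬ p^2 ∣ m := fun hc => hpm ((dvd_pow_self p (by norm_num)).trans hc)
      rw [hαZ, hβZ]; dsimp only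
      rw [if_neg hp2m, if_neg hpm, sub_zero]
      exact dvd_zero _
  have hγδ : ∀ k, (p:ℤ_[p])^(k+1) ∣ γZ k - δZ k := by
    intro k
    match k with
    | 0 =>
      rw [hγZ, hδZ]; dsimp only
      rw [if_pos rfl, sub_zero, pow_one]
      exact Dvd.intro _ rfl
    | (k+1) =>
      have h := honda_coeff f hfp k m
      rw [hγZ, hδZ]; dsimp only
      rw [if_neg (Nat.succ_ne_zero k)]
      have e : (p:ℤ_[p]) * A (k+1) m - (p:ℤ_[p]) * βZ (k+1-1)
          = (p:ℤ_[p]) * (A (k+1) m - βZ k) := by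
        rw [show k + 1 - 1 = k from rfl]
        ring
      rw [e, pow_succ']
      refine mul_dvd_mul_left _ ?_
      rw [hβZ]; dsimp only
      exact h
  -- summabilities
  have hxb' : ∀ k, ‖x k i j‖ ≤ (p:ℝ)^(k/2) := fun k => hxb k i j
  have hpv : ∀ k, ‖(p:ℚ_[p]) * x (k+1) i j‖ ≤ (p:ℝ)^(k/2) := by
    intro k
    rw [norm_mul, Padic.norm_p]
    calc ((p:ℝ))⁻¹ * ‖x (k+1) i j‖ ≤ ((p:ℝ))⁻¹ * ((p:ℝ)^(k/2) * p) := by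
          refine mul_le_mul_of_nonneg_left ?_ (by positivity)
          calc ‖x (k+1) i j‖ ≤ (p:ℝ)^((k+1)/2) := hxb' (k+1)
            _ ≤ (p:ℝ)^(k/2+1) := pow_le_pow_right₀ hp1R (by omega)
            _ = (p:ℝ)^(k/2) * p := by rw [pow_succ]
      _ = (p:ℝ)^(k/2) := by field_simp
  have hwb : ∀ k : ℕ, ‖(if k = 0 then (0:ℚ_[p]) else x (k-1) i j)‖ ≤ (p:ℝ)^(k/2) := by
    intro k
    split_ifs
    · simp only [norm_zero]; positivity
    · calc ‖x (k-1) i j‖ ≤ (p:ℝ)^((k-1)/2) := hxb' (k-1)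
        _ ≤ (p:ℝ)^(k/2) := pow_le_pow_right₀ hp1R (by omega)
  have Sαx : Summable (fun k => (αZ k : ℚ_[p]) * x k i j) :=
    summable_helper _ ((p:ℝ)^J) fun k => hmaster J k _ _ (hdα k) (hxb' k)
  have Sε : Summable (fun k => (βZ (k+1) : ℚ_[p]) * x k i j) :=
    summable_helper _ ((p:ℝ)^J) fun k => hmaster J k _ _ (hdβ' k) (hxb' k)
  have Sγx : Summable (fun k => (γZ k : ℚ_[p]) * x k i j) :=
    summable_helper _ ((p:ℝ)^J) fun k => hmaster J k _ _ (hdγ k) (hxb' k)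
  have Sδx : Summable (fun k => (δZ k : ℚ_[p]) * x k i j) :=
    summable_helper _ ((p:ℝ)^J) fun k => hmaster J k _ _ (hdδ k) (hxb' k)
  have Sa : Summable (fun k => (βZ k : ℚ_[p]) * ((p:ℚ_[p]) * x (k+1) i j)) :=
    summable_helper _ ((p:ℝ)^J) fun k => hmaster J k _ _ (hdβ k) (hpv k)
  have Sw : Summable (fun k => (βZ k : ℚ_[p]) * (if k = 0 then (0:ℚ_[p]) else x (k-1) i j)) :=
    summable_helper _ ((p:ℝ)^J) fun k => hmaster J k _ _ (hdβ k) (hwb k)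
  -- entry identities for the three summands of the goal
  have h1 : (if p ^ 2 ∣ m then L (m / p ^ 2) else 0) i j
      = ∑' k, (αZ k : ℚ_[p]) * x k i j := by
    by_cases h : p^2 ∣ m
    · rw [if_pos h, hLe]
      exact tsum_congr fun k => by rw [hαZ]; dsimp only; rw [if_pos h]
    · rw [if_neg h]
      have : ∀ k, (αZ k : ℚ_[p]) * x k i j = 0 := by
        intro k; rw [hαZ]; dsimp only; rw [if_neg h]; simp
      rw [tsum_congr this, tsum_zero, Matrix.zero_apply]
  have h3 : ((p:ℚ_[p]) • L m) i j = ∑' k, (γZ k : ℚ_[p]) * x k i j := by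
    rw [Matrix.smul_apply, smul_eq_mul, hLe, ← tsum_mul_left]
    exact tsum_congr fun k => by rw [hγZ]; push_cast; ring
  have h2 : (Cp * (if p ∣ m then L (m / p) else 0)) i j
      = ∑' k, (βZ k : ℚ_[p]) * ((Cp * x k) i j) := by
    by_cases h : p ∣ m
    · rw [if_pos h, Matrix.mul_apply]
      have step1 : ∀ l, Cp i l * L (m/p) l j
          = ∑' k, Cp i l * ((A k (m/p) : ℚ_[p]) * x k l j) := by
        intro l
        rw [hLe, ← tsum_mul_left]
      rw [Finset.sum_congr rfl fun l _ => step1 l]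
      rw [← Summable.tsum_finsetSum (fun l _ => (hsE (m/p) l j).mul_left (Cp i l))]
      refine tsum_congr fun k => ?_
      rw [Matrix.mul_apply, hβZ]; dsimp only
      rw [if_pos h, Finset.mul_sum]
      exact Finset.sum_congr rfl fun l _ => by ring
    · rw [if_neg h, Matrix.mul_zero, Matrix.zero_apply]
      have : ∀ k, (βZ k : ℚ_[p]) * ((Cp * x k) i j) = 0 := by
        intro k; rw [hβZ]; dsimp only; rw [if_neg h]; simp
      rw [tsum_congr this, tsum_zero]
  -- recurrence: entries of Cp * x k
  have hY : ∀ k : ℕ, (Cp * x k) i j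
      = (p:ℚ_[p]) * x (k+1) i j + (if k = 0 then (0:ℚ_[p]) else x (k-1) i j) := by
    intro k
    match k with
    | 0 =>
      rw [hx0, Matrix.mul_one, if_pos rfl, add_zero, ← hx1, Matrix.smul_apply, smul_eq_mul]
    | (k+1) =>
      have hE := hrec (k+2) (by omega)
      have hE' := congrFun (congrFun hE i) j
      simp only [Matrix.sub_apply, Matrix.add_apply, Matrix.smul_apply,
        Matrix.zero_apply, smul_eq_mul] at hE'
      rw [show k + 2 - 1 = k + 1 from rfl, show k + 2 - 2 = k from rfl] at hE'
      rw [if_neg (Nat.succ_ne_zero k), show k + 1 + 1 = k + 2 from rfl,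
        show k + 1 - 1 = k from rfl]
      linear_combination -hE'
  -- split the middle series
  have hsplit : ∑' k, (βZ k : ℚ_[p]) * ((Cp * x k) i j)
      = (∑' k, (βZ k : ℚ_[p]) * ((p:ℚ_[p]) * x (k+1) i j))
        + ∑' k, (βZ k : ℚ_[p]) * (if k = 0 then (0:ℚ_[p]) else x (k-1) i j) := by
    rw [← Summable.tsum_add Sa Sw]
    exact tsum_congr fun k => by rw [hY k]; ring
  -- shift the two middle series
  have hshift1 : ∑' k, (βZ k : ℚ_[p]) * ((p:ℚ_[p]) * x (k+1) i j)
      = ∑' k, (δZ k : ℚ_[p]) * x k i j := by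
    rw [Summable.tsum_eq_zero_add Sδx]
    have e0 : (δZ 0 : ℚ_[p]) * x 0 i j = 0 := by
      rw [hδZ]; dsimp only; rw [if_pos rfl]; simp
    rw [e0, zero_add]
    refine tsum_congr fun k => ?_
    rw [hδZ]; dsimp only
    rw [if_neg (Nat.succ_ne_zero k)]
    have e2 : k + 1 - 1 = k := rfl
    rw [e2]
    push_cast
    ring
  have hshift2 : ∑' k, (βZ k : ℚ_[p]) * (if k = 0 then (0:ℚ_[p]) else x (k-1) i j)
      = ∑' k, (βZ (k+1) : ℚ_[p]) * x k i j := by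
    rw [Summable.tsum_eq_zero_add Sw]
    have e0 : ((βZ 0 : ℚ_[p]) * if (0:ℕ) = 0 then (0:ℚ_[p]) else x (0-1) i j) = 0 := by
      rw [if_pos rfl, mul_zero]
    rw [e0, zero_add]
    refine tsum_congr fun k => ?_
    rw [if_neg (Nat.succ_ne_zero k), show k + 1 - 1 = k from rfl]
  -- final combination
  rw [Matrix.add_apply, Matrix.sub_apply, h1, h2, h3, hsplit, hshift1, hshift2]
  have ecomb : ∑' k, (αZ k : ℚ_[p]) * x k i j
      - ((∑' k, (δZ k : ℚ_[p]) * x k i j) + ∑' k, (βZ (k+1) : ℚ_[p]) * x k i j)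
      + ∑' k, (γZ k : ℚ_[p]) * x k i j
      = (∑' k, ((αZ k - βZ (k+1) : ℤ_[p]) : ℚ_[p]) * x k i j)
        + ∑' k, ((γZ k - δZ k : ℤ_[p]) : ℚ_[p]) * x k i j := by
    rw [show (∑' k, ((αZ k - βZ (k+1) : ℤ_[p]) : ℚ_[p]) * x k i j)
        = ∑' k, ((αZ k : ℚ_[p]) * x k i j - (βZ (k+1) : ℚ_[p]) * x k i j) from
      tsum_congr fun k => by push_cast; ring]
    rw [show (∑' k, ((γZ k - δZ k : ℤ_[p]) : ℚ_[p]) * x k i j)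
        = ∑' k, ((γZ k : ℚ_[p]) * x k i j - (δZ k : ℚ_[p]) * x k i j) from
      tsum_congr fun k => by push_cast; ring]
    rw [Summable.tsum_sub Sαx Sε, Summable.tsum_sub Sγx Sδx]
    ring
  rw [ecomb]
  -- final norm bound
  have hppow : ∀ (k : ℕ) (c : ℤ_[p]), (p:ℤ_[p])^(k+1) ∣ c →
      ‖(c : ℚ_[p]) * x k i j‖ ≤ ((p:ℝ))⁻¹ := by
    intro k c hc
    rw [norm_mul]
    calc ‖(c:ℚ_[p])‖ * ‖x k i j‖ ≤ ((p:ℝ)^(k+1))⁻¹ * (p:ℝ)^(k/2) :=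
          mul_le_mul (norm_coe_le_of_dvd _ c hc) (hxb' k) (norm_nonneg _) (by positivity)
      _ ≤ (p:ℝ)^(0:ℕ) * ((p:ℝ)^(1:ℕ))⁻¹ := key_ineq hp0R hp1R _ _ _ _ (by omega)
      _ = ((p:ℝ))⁻¹ := by simp
  have hb1 : ‖∑' k, ((αZ k - βZ (k+1) : ℤ_[p]) : ℚ_[p]) * x k i j‖ ≤ ((p:ℝ))⁻¹ :=
    IsUltrametricDist.norm_tsum_le_of_forall_le_of_nonneg (by positivity)
      (fun k => hppow k _ (hαβ k))
  have hb2 : ‖∑' k, ((γZ k - δZ k : ℤ_[p]) : ℚ_[p]) * x k i j‖ ≤ ((p:ℝ))⁻¹ :=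
    IsUltrametricDist.norm_tsum_le_of_forall_le_of_nonneg (by positivity)
      (fun k => hppow k _ (hγδ k))
  exact (IsUltrametricDist.norm_add_le_max _ _).trans (max_le hb1 hb2)
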